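/- Let (G, M, I) be a formal context, let A1, A2 ⊆ M, and let K1 be the context obtained from (G, M, I) by adjoining a new object g1 (not in G) whose intent is A1 (i.e. g1' = A1 in K1). If there exists g ∈ G with A1 ∩ A2 ⊆ g', then no new A2-crucial implications arise: I_{A2}^{K1} ⊆ I_{A2}^{K}, where I_A^{K} = {(B, c) | B ∈ MC_A computed in K, c ∈ (B'' \ A) ∪ (A \ B) with B'' computed in K}. -/

import Mathlib

namespace FCA

variable {G M : Type*}

/-- The intent `g'` of an object `g`: the set of attributes it has. -/
def intent [Fintype M] (I : G → M → Prop) [∀ g m, Decidable (I g m)] (g : G) : Finset M :=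
  Finset.univ.filter (fun m => I g m)

/-- The extent `A'` of a set of attributes `A`. -/
def extent [Fintype G] (I : G → M → Prop) [∀ g m, Decidable (I g m)] (A : Finset M) :
    Finset G :=
  Finset.univ.filter (fun g => ∀ m ∈ A, I g m)

/-- The closure `A''` of a set of attributes `A`. -/
def closure [Fintype G] [Fintype M] (I : G → M → Prop) [∀ g m, Decidable (I g m)]
    (A : Finset M) : Finset M :=
  Finset.univ.filter (fun m => ∀ g ∈ extent I A, I g m)

/-- `C_A = {A ∩ g' | g ∈ G}`. -/
def CA [Fintype G] [Fintype M] [DecidableEq M] (I : G → M → Prop) [∀ g m, Decidable (I g m)]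
    (A : Finset M) : Finset (Finset M) :=
  Finset.univ.image (fun g => A ∩ intent I g)

/-- `MC_A`: the maximal elements of `C_A`. -/
def MCA [Fintype G] [Fintype M] [DecidableEq M] (I : G → M → Prop) [∀ g m, Decidable (I g m)]
    (A : Finset M) : Finset (Finset M) :=
  (CA I A).filter (fun B => ∀ C ∈ CA I A, ¬ B ⊂ C)

/-- The set of `A`-crucial implications, encoded as pairs `(B, c)`:
`c ∈ B'' \ A` encodes the implication `B → c` and `c ∈ A \ B` encodes the
negative implication `B → c̄`. -/
def crucial [Fintype G] [Fintype M] [DecidableEq M] (I : G → M → Prop)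
    [∀ g m, Decidable (I g m)] (A : Finset M) : Finset (Finset M × M) :=
  Finset.univ.filter
    (fun p => p.1 ∈ MCA I A ∧ p.2 ∈ (closure I p.1 \ A) ∪ (A \ p.1))

/-- The incidence relation of the context `K1` obtained from `(G, M, I)` by adjoining
a new object (represented by `none : Option G`) whose intent is `A1`. -/
def extRel (I : G → M → Prop) (A1 : Finset M) [DecidableEq M] : Option G → M → Prop :=
  fun g m => g.elim (m ∈ A1) (fun h => I h m)

instance (I : G → M → Prop) [∀ g m, Decidable (I g m)] [DecidableEq M] (A1 : Finset M) :
    ∀ g m, Decidable (extRel I A1 g m) := fun g m => by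
  cases g <;> unfold extRel <;> dsimp <;> infer_instance

lemma intent_some [Fintype M] [DecidableEq M] (I : G → M → Prop) [∀ g m, Decidable (I g m)]
    (A1 : Finset M) (g : G) : intent (extRel I A1) (some g) = intent I g := by
  ext m; simp only [intent, Finset.mem_filter, Finset.mem_univ, true_and]; exact Iff.rfl

lemma intent_none [Fintype M] [DecidableEq M] (I : G → M → Prop) [∀ g m, Decidable (I g m)]
    (A1 : Finset M) : intent (extRel I A1) (none : Option G) = A1 := by
  ext m; simp only [intent, Finset.mem_filter, Finset.mem_univ, true_and]; exact Iff.rfl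

lemma CA_subset [Fintype G] [Fintype M] [DecidableEq M] (I : G → M → Prop)
    [∀ g m, Decidable (I g m)] (A1 A2 : Finset M) :
    CA I A2 ⊆ CA (extRel I A1) A2 := by
  intro C hC
  simp only [CA, Finset.mem_image, Finset.mem_univ, true_and] at hC ⊢
  obtain ⟨g, rfl⟩ := hC
  exact ⟨some g, by rw [intent_some]⟩

lemma closure_ext_subset [Fintype G] [Fintype M] [DecidableEq M] (I : G → M → Prop)
    [∀ g m, Decidable (I g m)] (A1 B : Finset M) :
    closure (extRel I A1) B ⊆ closure I B := by
  intro c hc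
  simp only [closure, Finset.mem_filter, Finset.mem_univ, true_and] at hc ⊢
  intro g hg
  have hmem : (some g : Option G) ∈ extent (extRel I A1) B := by
    simp only [extent, Finset.mem_filter, Finset.mem_univ, true_and] at hg ⊢
    exact fun m hm => hg m hm
  exact hc _ hmem

/-- if some old object `g ∈ G` satisfies `A1 ∩ A2 ⊆ g'`, then adjoining a
new object with intent `A1` creates no new `A2`-crucial implications:
`I_{A2}^{K1} ⊆ I_{A2}^{K}`. -/
theorem stmt7 [Fintype G] [Fintype M] [DecidableEq M] (I : G → M → Prop)
    [∀ g m, Decidable (I g m)] (A1 A2 : Finset M)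
    (h : ∃ g : G, A1 ∩ A2 ⊆ intent I g) :
    crucial (extRel I A1) A2 ⊆ crucial I A2 := by
  obtain ⟨g0, hg0⟩ := h
  intro p hp
  simp only [crucial, Finset.mem_filter, Finset.mem_univ, true_and] at hp ⊢
  obtain ⟨hB, hc⟩ := hp
  simp only [MCA, Finset.mem_filter] at hB
  obtain ⟨hBC, hBmax⟩ := hB
  -- p.1 ∈ CA I A2
  have hBK : p.1 ∈ CA I A2 := by
    simp only [CA, Finset.mem_image, Finset.mem_univ, true_and] at hBC
    obtain ⟨g, hg⟩ := hBC
    cases g with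
    | some g =>
      simp only [CA, Finset.mem_image, Finset.mem_univ, true_and]
      rw [intent_some] at hg
      exact ⟨g, hg⟩
    | none =>
      rw [intent_none] at hg
      have hsub : A2 ∩ A1 ⊆ A2 ∩ intent I g0 := by
        intro x hx
        simp only [Finset.mem_inter] at hx ⊢
        exact ⟨hx.1, hg0 (Finset.mem_inter.mpr ⟨hx.2, hx.1⟩)⟩
      have hmem : A2 ∩ intent I g0 ∈ CA (extRel I A1) A2 :=
        CA_subset I A1 A2 (by
          simp only [CA, Finset.mem_image, Finset.mem_univ, true_and]; exact ⟨g0, rfl⟩)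
      have heq : A2 ∩ A1 = A2 ∩ intent I g0 := by
        by_contra hne
        exact hBmax _ hmem (hg ▸ hsub.ssubset_of_ne hne)
      rw [← hg, heq]
      simp only [CA, Finset.mem_image, Finset.mem_univ, true_and]
      exact ⟨g0, rfl⟩
  refine ⟨?_, ?_⟩
  · simp only [MCA, Finset.mem_filter]
    exact ⟨hBK, fun C hC => hBmax C (CA_subset I A1 A2 hC)⟩
  · rcases Finset.mem_union.mp hc with hc' | hc'
    · exact Finset.mem_union_left _ (Finset.mem_sdiff.mpr
        ⟨closure_ext_subset I A1 p.1 (Finset.mem_sdiff.mp hc').1,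
         (Finset.mem_sdiff.mp hc').2⟩)
    · exact Finset.mem_union_right _ hc'

end FCA
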